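/- If f(x) = p(x²) + x·q(x²) is a stable real polynomial of degree at least 2, then the real roots of p(−x²) and of x·q(−x²) are all real, all simple, and strictly interlace (between any two consecutive roots of one polynomial lies exactly one root of the other). -/

import Mathlib

open Polynomial

/-- `a` and `b` are consecutive roots of `p`. -/
def ConsecRoots (p : Polynomial ℝ) (a b : ℝ) : Prop :=
  p.IsRoot a ∧ p.IsRoot b ∧ a < b ∧ ∀ c : ℝ, a < c → c < b → ¬ p.IsRoot c

/-- The roots of `p` and `q` strictly interlace: between any two consecutive
roots of one polynomial lies exactly one root of the other. -/
def StrictlyInterlace (p q : Polynomial ℝ) : Prop :=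
  (∀ a b : ℝ, ConsecRoots p a b → ∃! c : ℝ, q.IsRoot c ∧ a < c ∧ c < b) ∧
  (∀ a b : ℝ, ConsecRoots q a b → ∃! c : ℝ, p.IsRoot c ∧ a < c ∧ c < b)

section HermiteBiehlerAux

open Set Filter Topology Complex


noncomputable def Wr (g h : Polynomial ℝ) (y : ℝ) : ℝ :=
  (h.derivative.eval y) * (g.eval y) - (g.derivative.eval y) * (h.eval y)

lemma Wr_swap (g h : Polynomial ℝ) (y : ℝ) : Wr h (-g) y = Wr g h y := by
  simp [Wr]; ring

/-- Just to the right of a simple root, `g` has the sign of `g'(a)`. -/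
lemma sign_near {g : Polynomial ℝ} {a : ℝ} (h0 : g.eval a = 0)
    (hd : g.derivative.eval a ≠ 0) :
    ∀ᶠ x in 𝓝[≠] a, 0 < (g.eval x * g.derivative.eval a) / (x - a) := by
  have hder : HasDerivAt (fun x => g.eval x) (g.derivative.eval a) a := g.hasDerivAt a
  rw [hasDerivAt_iff_tendsto_slope] at hder
  have hmem : {y : ℝ | 0 < y * g.derivative.eval a} ∈ 𝓝 (g.derivative.eval a) := by
    have hop : IsOpen {y : ℝ | 0 < y * g.derivative.eval a} :=
      isOpen_lt continuous_const (continuous_id.mul continuous_const)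
    exact hop.mem_nhds (by simpa using mul_self_pos.mpr hd)
  filter_upwards [hder.eventually_mem hmem] with x hx
  have : slope (fun x => g.eval x) a x = g.eval x / (x - a) := by
    simp [slope_def_field, h0]
  rw [this] at hx
  calc (0:ℝ) < g.eval x / (x - a) * g.derivative.eval a := hx
  _ = (g.eval x * g.derivative.eval a) / (x - a) := by ring

lemma exists_right {g : Polynomial ℝ} {a b : ℝ} (hab : a < b) (h0 : g.eval a = 0)
    (hd : g.derivative.eval a ≠ 0) :
    ∃ x ∈ Ioo a b, 0 < g.eval x * g.derivative.eval a := by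
  have h1 : ∀ᶠ x in 𝓝[>] a, 0 < (g.eval x * g.derivative.eval a) / (x - a) :=
    nhdsWithin_mono a (fun x (hx : x ∈ Ioi a) => ne_of_gt hx) (sign_near h0 hd)
  have h2 : ∀ᶠ x in 𝓝[>] a, x ∈ Ioo a b :=
    eventually_of_mem (Ioo_mem_nhdsGT hab) fun x hx => hx
  obtain ⟨x, hx1, hx2⟩ := (h1.and h2).exists
  refine ⟨x, hx2, ?_⟩
  have hxa : 0 < x - a := sub_pos.mpr hx2.1
  have := mul_pos hx1 hxa
  rwa [div_mul_cancel₀] at this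
  exact ne_of_gt hxa

lemma exists_left {g : Polynomial ℝ} {a b : ℝ} (hab : a < b) (h0 : g.eval b = 0)
    (hd : g.derivative.eval b ≠ 0) :
    ∃ x ∈ Ioo a b, g.eval x * g.derivative.eval b < 0 := by
  have h1 : ∀ᶠ x in 𝓝[<] b, 0 < (g.eval x * g.derivative.eval b) / (x - b) :=
    nhdsWithin_mono b (fun x (hx : x ∈ Iio b) => ne_of_lt hx) (sign_near h0 hd)
  have h2 : ∀ᶠ x in 𝓝[<] b, x ∈ Ioo a b :=
    eventually_of_mem (Ioo_mem_nhdsLT hab) fun x hx => hx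
  obtain ⟨x, hx1, hx2⟩ := (h1.and h2).exists
  refine ⟨x, hx2, ?_⟩
  have hxb : x - b < 0 := sub_neg.mpr hx2.2
  rcases div_pos_iff.mp hx1 with ⟨_, h⟩ | ⟨h, _⟩
  · linarith
  · exact h

/-- constant sign on a root-free interval -/
lemma const_sign {g : Polynomial ℝ} {a b : ℝ}
    (hno : ∀ c : ℝ, a < c → c < b → ¬ g.IsRoot c) {x y : ℝ}
    (hx : x ∈ Ioo a b) (hy : y ∈ Ioo a b) : 0 < g.eval x * g.eval y := by
  rcases lt_trichotomy (g.eval x * g.eval y) 0 with h | h | h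
  · exfalso
    rcases le_total x y with hxy | hxy
    · have hc : ContinuousOn (fun t => g.eval t) (Icc x y) := g.continuous.continuousOn
      have : (0:ℝ) ∈ Icc (g.eval x) (g.eval y) ∪ Icc (g.eval y) (g.eval x) := by
        rcases mul_neg_iff.mp h with ⟨h1, h2⟩ | ⟨h1, h2⟩
        · exact Or.inr ⟨h2.le, h1.le⟩
        · exact Or.inl ⟨h1.le, h2.le⟩
      rcases this with hm | hm
      · obtain ⟨c, hc1, hc2⟩ := intermediate_value_Icc hxy hc hm
        exact hno c (lt_of_lt_of_le hx.1 hc1.1) (lt_of_le_of_lt hc1.2 hy.2) hc2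
      · obtain ⟨c, hc1, hc2⟩ := intermediate_value_Icc' hxy hc hm
        exact hno c (lt_of_lt_of_le hx.1 hc1.1) (lt_of_le_of_lt hc1.2 hy.2) hc2
    · have hc : ContinuousOn (fun t => g.eval t) (Icc y x) := g.continuous.continuousOn
      have : (0:ℝ) ∈ Icc (g.eval y) (g.eval x) ∪ Icc (g.eval x) (g.eval y) := by
        rcases mul_neg_iff.mp h with ⟨h1, h2⟩ | ⟨h1, h2⟩
        · exact Or.inl ⟨h2.le, h1.le⟩
        · exact Or.inr ⟨h1.le, h2.le⟩
      rcases this with hm | hm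
      · obtain ⟨c, hc1, hc2⟩ := intermediate_value_Icc hxy hc hm
        exact hno c (lt_of_lt_of_le hy.1 hc1.1) (lt_of_le_of_lt hc1.2 hx.2) hc2
      · obtain ⟨c, hc1, hc2⟩ := intermediate_value_Icc' hxy hc hm
        exact hno c (lt_of_lt_of_le hy.1 hc1.1) (lt_of_le_of_lt hc1.2 hx.2) hc2
  · exfalso
    rcases mul_eq_zero.mp h with h1 | h1
    · exact hno x hx.1 hx.2 h1
    · exact hno y hy.1 hy.2 h1
  · exact h

lemma exists_root_between {g h : Polynomial ℝ} (hW : ∀ y : ℝ, 0 < Wr g h y)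
    {a b : ℝ} (hc : ConsecRoots g a b) : ∃ c, h.IsRoot c ∧ a < c ∧ c < b := by
  obtain ⟨ha, hb, hab, hno⟩ := hc
  have hWa := hW a; have hWb := hW b
  have ha' : g.eval a = 0 := ha
  have hb' : g.eval b = 0 := hb
  rw [Wr, ha'] at hWa
  rw [Wr, hb'] at hWb
  have hda : g.derivative.eval a * h.eval a < 0 := by linarith [hWa]
  have hdb : g.derivative.eval b * h.eval b < 0 := by linarith [hWb]
  have hda0 : g.derivative.eval a ≠ 0 := by
    intro h0; rw [h0] at hda; simp at hda
  have hdb0 : g.derivative.eval b ≠ 0 := by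
    intro h0; rw [h0] at hdb; simp at hdb
  obtain ⟨x, hx, hgx⟩ := exists_right hab ha' hda0
  obtain ⟨y, hy, hgy⟩ := exists_left hab hb' hdb0
  have hxy : 0 < g.eval x * g.eval y := const_sign hno hx hy
  have hdd : g.derivative.eval a * g.derivative.eval b < 0 := by
    nlinarith [mul_pos hgx hxy, mul_neg_of_pos_of_neg hgx hgy, sq_nonneg (g.eval x), sq_nonneg (g.eval y)]
  have hff : h.eval a * h.eval b < 0 := by
    nlinarith [mul_pos_of_neg_of_neg hda hdb]
  have hcont : ContinuousOn (fun t => h.eval t) (Icc a b) := h.continuous.continuousOn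
  rcases mul_neg_iff.mp hff with ⟨h1, h2⟩ | ⟨h1, h2⟩
  · obtain ⟨c, hc1, hc2⟩ := intermediate_value_Ioo' hab.le hcont (⟨h2, h1⟩ : (0:ℝ) ∈ Ioo (h.eval b) (h.eval a))
    exact ⟨c, hc2, hc1.1, hc1.2⟩
  · obtain ⟨c, hc1, hc2⟩ := intermediate_value_Ioo hab.le hcont (⟨h1, h2⟩ : (0:ℝ) ∈ Ioo (h.eval a) (h.eval b))
    exact ⟨c, hc2, hc1.1, hc1.2⟩


lemma h_ne_zero {g h : Polynomial ℝ} (hW : ∀ y : ℝ, 0 < Wr g h y) : h ≠ 0 := by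
  intro h0
  have := hW 0
  rw [h0] at this
  simp [Wr] at this

lemma no_two_roots {g h : Polynomial ℝ} (hW : ∀ y : ℝ, 0 < Wr g h y)
    {a b c1 c2 : ℝ} (hc : ConsecRoots g a b)
    (h1 : h.IsRoot c1) (h2 : h.IsRoot c2) (hi1 : c1 ∈ Set.Ioo a b)
    (hi2 : c2 ∈ Set.Ioo a b) (h12 : c1 < c2) : False := by
  have hh0 : h ≠ 0 := h_ne_zero hW
  have hfin : Set.Finite {x | h.IsRoot x ∧ c1 < x ∧ x ≤ c2} :=
    (Polynomial.finite_setOf_isRoot hh0).subset fun x hx => hx.1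
  have hne : {x | h.IsRoot x ∧ c1 < x ∧ x ≤ c2}.Nonempty := ⟨c2, h2, h12, le_refl _⟩
  set S := hfin.toFinset with hS
  have hSne : S.Nonempty := by
    rw [hS]
    exact Set.Finite.toFinset_nonempty hfin |>.mpr hne
  set c2' := S.min' hSne with hc2'
  have hc2'mem : h.IsRoot c2' ∧ c1 < c2' ∧ c2' ≤ c2 := by
    have hmem : c2' ∈ S := S.min'_mem hSne
    rwa [hS, Set.Finite.mem_toFinset] at hmem
  have hcons : ConsecRoots h c1 c2' := by
    refine ⟨h1, hc2'mem.1, hc2'mem.2.1, fun x hx1 hx2 hroot => ?_⟩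
    have hxS : x ∈ S := by
      rw [hS, Set.Finite.mem_toFinset]
      exact ⟨hroot, hx1, le_of_lt (lt_of_lt_of_le hx2 hc2'mem.2.2)⟩
    exact absurd (S.min'_le x hxS) (not_le.mpr hx2)
  have hW' : ∀ y : ℝ, 0 < Wr h (-g) y := fun y => (Wr_swap g h y).symm ▸ hW y
  obtain ⟨c, hcroot, hcc1, hcc2⟩ := exists_root_between hW' hcons
  have hgroot : g.IsRoot c := by
    have : (-g).eval c = 0 := hcroot
    simpa using this
  exact hc.2.2.2 c (lt_trans hi1.1 hcc1)
    (lt_of_lt_of_le (lt_of_lt_of_le hcc2 hc2'mem.2.2) hi2.2.le) hgroot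

lemma interlace_one {g h : Polynomial ℝ} (hW : ∀ y : ℝ, 0 < Wr g h y) :
    ∀ a b : ℝ, ConsecRoots g a b → ∃! c : ℝ, h.IsRoot c ∧ a < c ∧ c < b := by
  intro a b hc
  obtain ⟨c, hroot, h1, h2⟩ := exists_root_between hW hc
  refine ⟨c, ⟨hroot, h1, h2⟩, fun y hy => ?_⟩
  rcases lt_trichotomy y c with hlt | heq | hgt
  · exact absurd (no_two_roots hW hc hy.1 hroot ⟨hy.2.1, hy.2.2⟩ ⟨h1, h2⟩ hlt) id
  · exact heq
  · exact absurd (no_two_roots hW hc hroot hy.1 ⟨h1, h2⟩ ⟨hy.2.1, hy.2.2⟩ hgt) id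


noncomputable def PP (c : ℂ) (s : Multiset ℂ) : Polynomial ℂ :=
  C c * (s.map fun w => X - C w).prod

lemma PP_cons (c w : ℂ) (s : Multiset ℂ) :
    PP c (w ::ₘ s) = (X - C w) * PP c s := by
  simp only [PP, Multiset.map_cons, Multiset.prod_cons]
  ring

lemma eval_PP_ne_zero (c : ℂ) (hc : c ≠ 0) (s : Multiset ℂ)
    (hs : ∀ w ∈ s, 0 < w.im) (t : ℝ) : (PP c s).eval (t : ℂ) ≠ 0 := by
  induction s using Multiset.induction_on with
  | empty => simpa [PP] using hc
  | cons w s ih =>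
    rw [PP_cons]
    have hw : 0 < w.im := hs w (Multiset.mem_cons_self w s)
    have h1 : ((t : ℂ) - w) ≠ 0 := by
      intro h
      have : ((t:ℂ) - w).im = 0 := by rw [h]; simp
      simp [Complex.sub_im, Complex.ofReal_im] at this
      rw [← this] at hw; simp at hw
    simp only [eval_mul, eval_sub, eval_X, eval_C]
    exact mul_ne_zero h1 (ih fun w hw' => hs w (Multiset.mem_cons_of_mem hw'))

lemma im_nonneg (c : ℂ) (hc : c ≠ 0) (s : Multiset ℂ)
    (hs : ∀ w ∈ s, 0 < w.im) (t : ℝ) :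
    0 ≤ (((PP c s).derivative.eval (t:ℂ)) * (starRingEnd ℂ) ((PP c s).eval (t:ℂ))).im ∧
    (s ≠ 0 → 0 < (((PP c s).derivative.eval (t:ℂ)) * (starRingEnd ℂ) ((PP c s).eval (t:ℂ))).im) := by
  induction s using Multiset.induction_on with
  | empty =>
    constructor
    · simp [PP]
    · intro h; exact absurd rfl h
  | cons w s ih =>
    have hs' : ∀ w ∈ s, 0 < w.im := fun w hw' => hs w (Multiset.mem_cons_of_mem hw')
    have ih' := ih hs'
    have hw : 0 < w.im := hs w (Multiset.mem_cons_self w s)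
    set E := (PP c s).eval (t:ℂ) with hE
    set D := (PP c s).derivative.eval (t:ℂ) with hD
    set z := (t:ℂ) - w with hz
    have hEz : (PP c (w ::ₘ s)).eval (t:ℂ) = z * E := by
      rw [PP_cons]; simp [hz, hE]
    have hDz : (PP c (w ::ₘ s)).derivative.eval (t:ℂ) = E + z * D := by
      rw [PP_cons, derivative_mul]
      simp [hz, hE, hD]
    have key : ((E + z * D) * (starRingEnd ℂ) (z * E)).im
        = Complex.normSq E * w.im + Complex.normSq z * (D * (starRingEnd ℂ) E).im := by
      have expand : (E + z * D) * (starRingEnd ℂ) (z * E)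
          = (Complex.normSq E : ℂ) * (starRingEnd ℂ) z
            + (Complex.normSq z : ℂ) * (D * (starRingEnd ℂ) E) := by
        rw [map_mul]
        rw [← Complex.mul_conj, ← Complex.mul_conj]
        ring
      rw [expand]
      have h1 : ((Complex.normSq E : ℂ) * (starRingEnd ℂ) z).im
          = Complex.normSq E * w.im := by
        rw [Complex.im_ofReal_mul]
        simp [hz, Complex.conj_im]
      have h2 : ((Complex.normSq z : ℂ) * (D * (starRingEnd ℂ) E)).im
          = Complex.normSq z * (D * (starRingEnd ℂ) E).im := Complex.im_ofReal_mul _ _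
      rw [Complex.add_im, h1, h2]
    have hEne : E ≠ 0 := eval_PP_ne_zero c hc s hs' t
    have hpos : 0 < Complex.normSq E * w.im :=
      mul_pos (Complex.normSq_pos.mpr hEne) hw
    have hsecond : 0 ≤ Complex.normSq z * (D * (starRingEnd ℂ) E).im :=
      mul_nonneg (Complex.normSq_nonneg z) ih'.1
    constructor
    · rw [hEz, hDz, key]; linarith
    · intro _; rw [hEz, hDz, key]; linarith

lemma factor_lt {w r : ℂ} (hw : 0 < w.im) (hr : 0 < r.im) :
    Complex.normSq (w - r) < Complex.normSq ((starRingEnd ℂ) w - r) := by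
  simp only [Complex.normSq_apply, Complex.sub_re, Complex.sub_im,
    Complex.conj_re, Complex.conj_im]
  nlinarith [mul_pos hw hr]

lemma prods_lt (s : Multiset ℂ) (w : ℂ) (hw : 0 < w.im) (hs : ∀ r ∈ s, 0 < r.im) :
    0 ≤ (s.map fun r => Complex.normSq (w - r)).prod ∧
    (s.map fun r => Complex.normSq (w - r)).prod
      ≤ (s.map fun r => Complex.normSq ((starRingEnd ℂ) w - r)).prod ∧
    0 < (s.map fun r => Complex.normSq ((starRingEnd ℂ) w - r)).prod ∧
    (s ≠ 0 → (s.map fun r => Complex.normSq (w - r)).prod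
      < (s.map fun r => Complex.normSq ((starRingEnd ℂ) w - r)).prod) := by
  induction s using Multiset.induction_on with
  | empty => simp
  | cons r s ih =>
    have hr : 0 < r.im := hs r (Multiset.mem_cons_self r s)
    obtain ⟨ih1, ih2, ih3, _⟩ := ih fun x hx => hs x (Multiset.mem_cons_of_mem hx)
    have hf : Complex.normSq (w - r) < Complex.normSq ((starRingEnd ℂ) w - r) :=
      factor_lt hw hr
    have hf0 : 0 ≤ Complex.normSq (w - r) := Complex.normSq_nonneg _
    simp only [Multiset.map_cons, Multiset.prod_cons]
    refine ⟨mul_nonneg hf0 ih1, ?_, ?_, ?_⟩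
    · calc Complex.normSq (w - r) * (s.map fun r => Complex.normSq (w - r)).prod
          ≤ Complex.normSq (w - r)
            * (s.map fun r => Complex.normSq ((starRingEnd ℂ) w - r)).prod :=
            mul_le_mul_of_nonneg_left ih2 hf0
        _ ≤ _ := mul_le_mul_of_nonneg_right hf.le ih3.le
    · exact mul_pos (lt_of_le_of_lt hf0 hf) ih3
    · intro _
      calc Complex.normSq (w - r) * (s.map fun r => Complex.normSq (w - r)).prod
          ≤ Complex.normSq (w - r)
            * (s.map fun r => Complex.normSq ((starRingEnd ℂ) w - r)).prod :=
            mul_le_mul_of_nonneg_left ih2 hf0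
        _ < _ := mul_lt_mul_of_pos_right hf ih3

lemma eval_PP (c : ℂ) (s : Multiset ℂ) (w : ℂ) :
    (PP c s).eval w = c * (s.map fun r => w - r).prod := by
  simp [PP, eval_multiset_prod, Multiset.map_map, Function.comp_def]

lemma normSq_eval_PP (c : ℂ) (s : Multiset ℂ) (w : ℂ) :
    Complex.normSq ((PP c s).eval w)
      = Complex.normSq c * (s.map fun r => Complex.normSq (w - r)).prod := by
  rw [eval_PP, map_mul]
  congr 1
  rw [← Multiset.prod_hom _ Complex.normSq, Multiset.map_map]
  rfl

lemma normSq_lt (c : ℂ) (hc : c ≠ 0) (s : Multiset ℂ) (hne : s ≠ 0)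
    (w : ℂ) (hw : 0 < w.im) (hs : ∀ r ∈ s, 0 < r.im) :
    Complex.normSq ((PP c s).eval w)
      < Complex.normSq ((PP c s).eval ((starRingEnd ℂ) w)) := by
  rw [normSq_eval_PP, normSq_eval_PP]
  obtain ⟨_, _, _, h4⟩ := prods_lt s w hw hs
  exact mul_lt_mul_of_pos_left (h4 hne) (Complex.normSq_pos.mpr hc)

lemma mult_le_one {g : Polynomial ℝ} 
    (hder : ∀ a : ℝ, g.eval a = 0 → g.derivative.eval a ≠ 0) (x : ℝ) :
    g.rootMultiplicity x ≤ 1 := by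
  by_contra hcon
  push_neg at hcon
  have h2 : 2 ≤ g.rootMultiplicity x := hcon
  have hdvd : (X - C x)^2 ∣ g :=
    dvd_trans (pow_dvd_pow _ h2) (Polynomial.pow_rootMultiplicity_dvd g x)
  obtain ⟨u, hu⟩ := hdvd
  have hroot : g.eval x = 0 := by rw [hu]; simp
  have hd : g.derivative.eval x = 0 := by
    rw [hu, derivative_mul, derivative_pow]
    simp
  exact hder x hroot hd

end HermiteBiehlerAux

section Main
open Complex

theorem stmt5 (f p q : Polynomial ℝ)
    (hdec : f = p.comp (Polynomial.X ^ 2) + Polynomial.X * q.comp (Polynomial.X ^ 2))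
    (hdeg : 2 ≤ f.natDegree)
    (hstab : ∀ z : ℂ, Polynomial.aeval z f = 0 → z.re < 0) :
    (∀ z : ℂ, Polynomial.aeval z (p.comp (-(Polynomial.X ^ 2))) = 0 → z.im = 0) ∧
    (∀ z : ℂ, Polynomial.aeval z (Polynomial.X * q.comp (-(Polynomial.X ^ 2))) = 0 → z.im = 0) ∧
    (∀ x : ℝ, (p.comp (-(Polynomial.X ^ 2))).rootMultiplicity x ≤ 1) ∧
    (∀ x : ℝ, (Polynomial.X * q.comp (-(Polynomial.X ^ 2))).rootMultiplicity x ≤ 1) ∧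
    StrictlyInterlace (p.comp (-(Polynomial.X ^ 2)))
      (Polynomial.X * q.comp (-(Polynomial.X ^ 2))) := by
  set g : Polynomial ℝ := p.comp (-(Polynomial.X ^ 2)) with hg
  set h : Polynomial ℝ := Polynomial.X * q.comp (-(Polynomial.X ^ 2)) with hh
  have hf0 : f ≠ 0 := by
    intro h0
    rw [h0] at hdeg
    simp at hdeg
  set F : Polynomial ℂ := (f.map (algebraMap ℝ ℂ)).comp (C Complex.I * X) with hF
  -- evaluation of F
  have hFeval : ∀ z : ℂ, F.eval z = aeval (Complex.I * z) f := by
    intro z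
    rw [hF, eval_comp]
    simp [aeval_def, eval_map]
  -- F as g + i h pointwise
  have hghval : ∀ z : ℂ, F.eval z = aeval z g + Complex.I * aeval z h := by
    intro z
    rw [hFeval, hdec, hg, hh]
    simp only [map_add, aeval_comp, map_mul, aeval_X, map_neg, map_pow]
    have hIz : (Complex.I * z) ^ 2 = -(z ^ 2) := by
      rw [mul_pow, Complex.I_sq]; ring
    rw [hIz]
    ring
  -- F as a polynomial identity
  have hFgh : F = g.map (algebraMap ℝ ℂ) + C Complex.I * h.map (algebraMap ℝ ℂ) := by
    apply Polynomial.funext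
    intro z
    rw [hghval z]
    simp [aeval_def, eval_map]
  -- degree facts
  have hFdeg : F.natDegree = f.natDegree := by
    rw [hF, natDegree_comp, natDegree_C_mul_X _ Complex.I_ne_zero,
      natDegree_map, mul_one]
  have hFne : F ≠ 0 := by
    intro h0
    rw [h0] at hFdeg
    rw [natDegree_zero] at hFdeg
    omega
  -- roots of F are in the upper half plane
  have him : ∀ w ∈ F.roots, 0 < w.im := by
    intro w hw
    have hr : F.eval w = 0 := (Polynomial.isRoot_of_mem_roots hw)
    rw [hFeval] at hr
    have := hstab _ hr
    simp only [Complex.mul_re, Complex.I_re, Complex.I_im, zero_mul, one_mul,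
      zero_sub, neg_lt, neg_zero] at this
    linarith [this]
  have hsplit : F.Splits := IsAlgClosed.splits F
  have hcard : F.roots.card = F.natDegree := (splits_iff_card_roots).mp hsplit
  have hrne : F.roots ≠ 0 := by
    intro h0
    rw [h0] at hcard
    simp at hcard
    omega
  have hFPP : F = PP F.leadingCoeff F.roots := by
    rw [PP]
    exact hsplit.eq_prod_roots
  have hlc : F.leadingCoeff ≠ 0 := leadingCoeff_ne_zero.mpr hFne
  -- the Wronskian positivity
  have hW : ∀ t : ℝ, 0 < Wr g h t := by
    intro t
    have him2 := (im_nonneg F.leadingCoeff hlc F.roots him t).2 hrne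
    rw [← hFPP] at him2
    -- rewrite evals in terms of g, h
    have e1 : F.eval (t : ℂ) = ((g.eval t : ℝ) : ℂ) + Complex.I * ((h.eval t : ℝ) : ℂ) := by
      rw [hghval]
      rw [show ((t:ℝ):ℂ) = algebraMap ℝ ℂ t from rfl,
        aeval_algebraMap_apply_eq_algebraMap_eval, aeval_algebraMap_apply_eq_algebraMap_eval]
      rfl
    have e2 : F.derivative.eval (t : ℂ)
        = ((g.derivative.eval t : ℝ) : ℂ) + Complex.I * ((h.derivative.eval t : ℝ) : ℂ) := by
      rw [hFgh, derivative_add, derivative_C_mul, derivative_map, derivative_map]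
      rw [eval_add, eval_mul, eval_C]
      rw [show ((t:ℝ):ℂ) = algebraMap ℝ ℂ t from rfl, eval_map, eval_map,
        ← aeval_def, ← aeval_def, aeval_algebraMap_apply_eq_algebraMap_eval,
        aeval_algebraMap_apply_eq_algebraMap_eval]
      rfl
    rw [e1, e2] at him2
    have hcomp : ((((g.derivative.eval t : ℝ) : ℂ) + Complex.I * ((h.derivative.eval t : ℝ) : ℂ))
        * (starRingEnd ℂ) (((g.eval t : ℝ) : ℂ) + Complex.I * ((h.eval t : ℝ) : ℂ))).im
        = h.derivative.eval t * g.eval t - g.derivative.eval t * h.eval t := by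
      simp only [map_add, map_mul, Complex.conj_ofReal, Complex.conj_I]
      simp only [Complex.mul_im, Complex.add_im, Complex.add_re, Complex.mul_re,
        Complex.ofReal_re, Complex.ofReal_im, Complex.I_re, Complex.I_im,
        Complex.neg_re, Complex.neg_im]
      ring
    rw [hcomp] at him2
    exact him2
  have hgne : g ≠ 0 := by
    intro h0
    have := hW 0
    rw [h0] at this
    simp [Wr] at this
  have hhne : h ≠ 0 := h_ne_zero hW
  have hgder : ∀ a : ℝ, g.eval a = 0 → g.derivative.eval a ≠ 0 := by
    intro a ha hda
    have := hW a
    rw [Wr, ha, hda] at this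
    simp at this
  have hhder : ∀ a : ℝ, h.eval a = 0 → h.derivative.eval a ≠ 0 := by
    intro a ha hda
    have := hW a
    rw [Wr, ha, hda] at this
    simp at this
  -- key upper half plane non-vanishing
  have hnormeq : ∀ w : ℂ, 0 < w.im →
      Complex.normSq (F.eval w) < Complex.normSq (F.eval ((starRingEnd ℂ) w)) := by
    intro w hw
    rw [hFPP]
    exact normSq_lt F.leadingCoeff hlc F.roots hrne w hw him
  have keyg : ∀ w : ℂ, 0 < w.im → aeval w g ≠ 0 := by
    intro w hw hroot
    have hconj : aeval ((starRingEnd ℂ) w) g = 0 := by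
      rw [aeval_conj, hroot, map_zero]
    have e1 : F.eval w = Complex.I * aeval w h := by rw [hghval, hroot]; ring
    have e2 : F.eval ((starRingEnd ℂ) w)
        = Complex.I * (starRingEnd ℂ) (aeval w h) := by
      rw [hghval, hconj, aeval_conj]; ring
    have := hnormeq w hw
    rw [e1, e2] at this
    simp only [Complex.normSq_mul, Complex.normSq_conj, Complex.normSq_I, one_mul] at this
    exact lt_irrefl _ this
  have keyh : ∀ w : ℂ, 0 < w.im → aeval w h ≠ 0 := by
    intro w hw hroot
    have hconj : aeval ((starRingEnd ℂ) w) h = 0 := by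
      rw [aeval_conj, hroot, map_zero]
    have e1 : F.eval w = aeval w g := by rw [hghval, hroot]; ring
    have e2 : F.eval ((starRingEnd ℂ) w) = (starRingEnd ℂ) (aeval w g) := by
      rw [hghval, hconj, aeval_conj]; ring
    have := hnormeq w hw
    rw [e1, e2, Complex.normSq_conj] at this
    exact lt_irrefl _ this
  have realg : ∀ z : ℂ, aeval z g = 0 → z.im = 0 := by
    intro z hz
    by_contra him0
    rcases lt_or_gt_of_ne him0 with hlt | hgt
    · have hconj : aeval ((starRingEnd ℂ) z) g = 0 := by
        rw [aeval_conj, hz, map_zero]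
      exact keyg _ (by simpa [Complex.conj_im] using neg_pos.mpr hlt) hconj
    · exact keyg z hgt hz
  have realh : ∀ z : ℂ, aeval z h = 0 → z.im = 0 := by
    intro z hz
    by_contra him0
    rcases lt_or_gt_of_ne him0 with hlt | hgt
    · have hconj : aeval ((starRingEnd ℂ) z) h = 0 := by
        rw [aeval_conj, hz, map_zero]
      exact keyh _ (by simpa [Complex.conj_im] using neg_pos.mpr hlt) hconj
    · exact keyh z hgt hz
  refine ⟨realg, realh, fun x => mult_le_one hgder x, fun x => mult_le_one hhder x, ?_, ?_⟩
  · exact interlace_one hW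
  · intro a b hc
    have hW' : ∀ y : ℝ, 0 < Wr h (-g) y := fun y => (Wr_swap g h y).symm ▸ hW y
    obtain ⟨c, ⟨hcr, hc1, hc2⟩, huniq⟩ := interlace_one hW' a b hc
    refine ⟨c, ⟨?_, hc1, hc2⟩, ?_⟩
    · have hcr' : (-g).eval c = 0 := hcr
      simpa using hcr'
    · intro y hy
      exact huniq y ⟨by simpa [Polynomial.IsRoot] using hy.1, hy.2⟩

end Main
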